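/- Let p be a prime and A an abelian group such that A[p] is finite. Then the image of the projection homomorphism π : Ã → A, (xᵢ)_{i∈ℕ} ↦ x₀, is exactly p^∞A = ⋂_{n≥1} pⁿA, and the kernel of π is the Tate module T_pA; thus there is an exact sequence 0 → T_pA → Ã → p^∞A → 0. (Abstract form of Lemma 3.16.) -/

import Mathlib

/-- The group `Ã` of sequences `(xᵢ)` in `A` with `xᵢ = p • xᵢ₊₁` for all `i`,
as a subgroup of the product group `ℕ → A`. -/
def tildeGroup (p : ℕ) (A : Type*) [AddCommGroup A] : AddSubgroup (ℕ → A) where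
  carrier := {s | ∀ i : ℕ, s i = p • s (i + 1)}
  zero_mem' := by intro i; simp
  add_mem' := by
    intro s t hs ht i
    simp only [Pi.add_apply, smul_add]
    rw [← hs i, ← ht i]
  neg_mem' := by
    intro s hs i
    simp only [Pi.neg_apply, smul_neg]
    rw [← hs i]

/-- The subgroup `p^∞A = ⋂_{n≥1} pⁿA` of an abelian group `A`. -/
def pinfSubgroup (p : ℕ) (A : Type*) [AddCommGroup A] : AddSubgroup A where
  carrier := {a | ∀ n : ℕ, 1 ≤ n → ∃ x : A, p ^ n • x = a}
  zero_mem' := fun _ _ => ⟨0, smul_zero _⟩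
  add_mem' := by
    intro a b ha hb n hn
    obtain ⟨x, hx⟩ := ha n hn
    obtain ⟨y, hy⟩ := hb n hn
    exact ⟨x + y, by rw [smul_add, hx, hy]⟩
  neg_mem' := by
    intro a ha n hn
    obtain ⟨x, hx⟩ := ha n hn
    exact ⟨-x, by rw [smul_neg, hx]⟩

/-- The Tate module `T_pA`: the subgroup of `Ã` of sequences with `x₀ = 0`. -/
def tateModule (p : ℕ) (A : Type*) [AddCommGroup A] : AddSubgroup ↥(tildeGroup p A) where
  carrier := {s | (s : ℕ → A) 0 = 0}
  zero_mem' := rfl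
  add_mem' := by
    intro s t hs ht
    simp only [Set.mem_setOf_eq] at *
    simp [AddSubgroup.coe_add, Pi.add_apply, hs, ht]
  neg_mem' := by
    intro s hs
    simp only [Set.mem_setOf_eq] at *
    simp [hs]


open CategoryTheory Opposite

section Aux

variable {A : Type*} [AddCommGroup A]

private lemma fiber_finite (p : ℕ) (hfin : {x : A | p • x = 0}.Finite) (y : A) :
    {x : A | p • x = y}.Finite := by
  by_cases h : ∃ x₀ : A, p • x₀ = y
  · obtain ⟨x₀, hx₀⟩ := h
    have : {x : A | p • x = y} = (fun z => z + x₀) '' {x : A | p • x = 0} := by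
      ext x
      constructor
      · intro hx
        simp only [Set.mem_setOf_eq] at hx
        exact ⟨x - x₀, by simp [smul_sub, hx, hx₀], by simp⟩
      · rintro ⟨z, hz, rfl⟩
        simp only [Set.mem_setOf_eq] at hz ⊢
        simp [smul_add, hz, hx₀]
    rw [this]
    exact hfin.image _
  · have : {x : A | p • x = y} = ∅ := by
      ext x; simp only [Set.mem_setOf_eq, Set.mem_empty_iff_false, iff_false]
      exact fun hx => h ⟨x, hx⟩
    simp [this]

private lemma torsion_finite (p : ℕ) (hfin : {x : A | p • x = 0}.Finite) (n : ℕ) :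
    {x : A | p ^ n • x = 0}.Finite := by
  induction n with
  | zero => exact Set.Finite.subset (Set.finite_singleton 0) (by intro x hx; simpa using hx)
  | succ n ih =>
    have hsub : {x : A | p ^ (n + 1) • x = 0} ⊆
        ⋃ y ∈ {x : A | p ^ n • x = 0}, {x : A | p • x = y} := by
      intro x hx
      simp only [Set.mem_setOf_eq] at hx
      refine Set.mem_biUnion (show p • x ∈ {x : A | p ^ n • x = 0} from ?_) rfl
      simp only [Set.mem_setOf_eq]
      rw [smul_smul, ← pow_succ]
      exact hx
    exact Set.Finite.subset (ih.biUnion (fun y _ => fiber_finite p hfin y)) hsub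

private lemma sol_finite (p : ℕ) (hfin : {x : A | p • x = 0}.Finite) (n : ℕ) (a : A) :
    {x : A | p ^ n • x = a}.Finite := by
  by_cases h : ∃ x₀ : A, p ^ n • x₀ = a
  · obtain ⟨x₀, hx₀⟩ := h
    have : {x : A | p ^ n • x = a} = (fun z => z + x₀) '' {x : A | p ^ n • x = 0} := by
      ext x
      constructor
      · intro hx
        simp only [Set.mem_setOf_eq] at hx
        exact ⟨x - x₀, by simp [smul_sub, hx, hx₀], by simp⟩
      · rintro ⟨z, hz, rfl⟩
        simp only [Set.mem_setOf_eq] at hz ⊢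
        simp [smul_add, hz, hx₀]
    rw [this]
    exact (torsion_finite p hfin n).image _
  · have : {x : A | p ^ n • x = a} = ∅ := by
      ext x; simp only [Set.mem_setOf_eq, Set.mem_empty_iff_false, iff_false]
      exact fun hx => h ⟨x, hx⟩
    simp [this]

/-- Inverse system of solutions of `p^n • x = a`. -/
private def solF (p : ℕ) (a : A) : ℕᵒᵖ ⥤ Type _ where
  obj n := {x : A // p ^ n.unop • x = a}
  map {n m} f := TypeCat.ofHom fun x => ⟨p ^ (n.unop - m.unop) • x.1, by
    have h : m.unop ≤ n.unop := leOfHom f.unop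
    rw [smul_smul, ← pow_add, Nat.add_sub_cancel' h]
    exact x.2⟩
  map_id n := by
    ext x
    simp
  map_comp {n m k} f g := by
    ext x
    have h1 : k.unop ≤ m.unop := leOfHom g.unop
    have h2 : m.unop ≤ n.unop := leOfHom f.unop
    show p ^ (n.unop - k.unop) • x.1 = p ^ (m.unop - k.unop) • p ^ (n.unop - m.unop) • x.1
    rw [smul_smul, ← pow_add]
    have heq : (m.unop - k.unop) + (n.unop - m.unop) = n.unop - k.unop := by omega
    rw [heq]

end Aux

theorem stmt_8 {A : Type*} [AddCommGroup A] (p : ℕ) (hp : p.Prime)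
    (hfin : {x : A | p • x = 0}.Finite) :
    ∀ π : ↥(tildeGroup p A) →+ A, (∀ s : ↥(tildeGroup p A), π s = (s : ℕ → A) 0) →
      π.range = pinfSubgroup p A ∧ π.ker = tateModule p A := by
  intro π hπ
  constructor
  · ext a
    constructor
    · rintro ⟨s, rfl⟩
      rw [hπ]
      intro n hn
      obtain ⟨s, hs⟩ := s
      refine ⟨s n, ?_⟩
      clear hn
      have key : ∀ k : ℕ, p ^ k • s k = s 0 := by
        intro k
        induction k with
        | zero => simp
        | succ k ih =>
          rw [pow_succ, mul_smul, ← hs k]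
          exact ih
      exact key n
    · intro ha
      -- build the inverse system
      haveI : ∀ j : ℕᵒᵖ, Finite ((solF p a).obj j) := fun j => by
        have := sol_finite p hfin j.unop a
        exact this.to_subtype
      haveI : ∀ j : ℕᵒᵖ, Nonempty ((solF p a).obj j) := by
        intro j
        rcases Nat.eq_zero_or_pos j.unop with h | h
        · exact ⟨⟨a, by rw [h]; simp⟩⟩
        · obtain ⟨x, hx⟩ := ha j.unop h
          exact ⟨⟨x, hx⟩⟩
      obtain ⟨u, hu⟩ := nonempty_sections_of_finite_inverse_system (solF p a)
      set s : ℕ → A := fun i => (u (op i)).1 with hs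
      have hmem : s ∈ tildeGroup p A := by
        intro i
        have := hu ((homOfLE (Nat.le_succ i)).op : op (i + 1) ⟶ op i)
        have h2 : p ^ ((i+1) - i) • s (i + 1) = s i := congrArg Subtype.val this
        simpa using h2.symm
      refine ⟨⟨s, hmem⟩, ?_⟩
      rw [hπ]
      have h0 : p ^ 0 • s 0 = a := (u (op 0)).2
      simpa using h0
  · ext s
    simp only [AddMonoidHom.mem_ker, hπ]
    rfl
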